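/- If μ₁ : V₁ → W₁ and μ₂ : V₂ → W₂ are ℤ_p-linear maps between ℤ_p-modules that are both T-maps, then μ₁ ⊗ μ₂ : V₁ ⊗_{ℤ_p} V₂ → W₁ ⊗_{ℤ_p} W₂ is a T-map. -/

import Mathlib

open TensorProduct

/-- A `ℤ_[p]`-module is `ℤ_[p]`-torsion if every element is annihilated by some
nonzero element of `ℤ_[p]`. -/
def IsPadicTorsion (p : ℕ) [Fact p.Prime] (U : Type*) [AddCommGroup U] [Module ℤ_[p] U] :
    Prop :=
  ∀ u : U, ∃ lam : ℤ_[p], lam ≠ 0 ∧ lam • u = 0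

/-- A `ℤ_[p]`-linear map is a T-map if its kernel and cokernel are `ℤ_[p]`-torsion. -/
def IsTMap (p : ℕ) [Fact p.Prime] {V W : Type*} [AddCommGroup V] [Module ℤ_[p] V]
    [AddCommGroup W] [Module ℤ_[p] W] (μ : V →ₗ[ℤ_[p]] W) : Prop :=
  IsPadicTorsion p (LinearMap.ker μ) ∧ IsPadicTorsion p (W ⧸ LinearMap.range μ)

set_option synthInstance.maxHeartbeats 1000000
set_option maxHeartbeats 1000000

section Aux


variable (p : ℕ) [Fact p.Prime]

local notation "R" => ℤ_[p]
local notation "Q" => FractionRing ℤ_[p]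

variable {M : Type} [AddCommGroup M] [Module ℤ_[p] M]

/-- A torsion element is killed by pure tensoring with any element of the fraction field. -/
lemma torsion_tmul_zero (q : Q) (m : M) {lam : R} (h0 : lam ≠ 0) (h : lam • m = 0) :
    q ⊗ₜ[ℤ_[p]] m = (0 : Q ⊗[ℤ_[p]] M) := by
  have hu : IsUnit (algebraMap R Q lam) :=
    IsLocalization.map_units Q ⟨lam, mem_nonZeroDivisors_of_ne_zero h0⟩
  have : q ⊗ₜ[ℤ_[p]] m = (lam • (((hu.unit⁻¹ : Qˣ) : Q) * q)) ⊗ₜ[ℤ_[p]] m := by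
    congr 1
    rw [Algebra.smul_def, ← mul_assoc, hu.mul_val_inv, one_mul]
  rw [this, smul_tmul, h, tmul_zero]

lemma one_tmul_eq_zero_iff (x : M) :
    (1 : Q) ⊗ₜ[ℤ_[p]] x = 0 ↔ ∃ lam : R, lam ≠ 0 ∧ lam • x = 0 := by
  constructor
  · intro h
    haveI : IsLocalizedModule (nonZeroDivisors R) (TensorProduct.mk R Q M 1) :=
      (isLocalizedModule_iff_isBaseChange (nonZeroDivisors R) Q _).mpr
        (TensorProduct.isBaseChange R M Q)
    have h' : (TensorProduct.mk R Q M 1) x = (TensorProduct.mk R Q M 1) 0 := by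
      simpa using h
    obtain ⟨c, hc⟩ := IsLocalizedModule.exists_of_eq (S := nonZeroDivisors R) h'
    exact ⟨(c : R), nonZeroDivisors.coe_ne_zero c, by simpa [Submonoid.smul_def] using hc⟩
  · rintro ⟨lam, h0, h⟩
    exact torsion_tmul_zero p 1 x h0 h

end Aux

section Bij

variable (p : ℕ) [Fact p.Prime]
variable {V W : Type} [AddCommGroup V] [Module ℤ_[p] V] [AddCommGroup W] [Module ℤ_[p] W]
variable (μ : V →ₗ[ℤ_[p]] W)

local notation "R" => ℤ_[p]
local notation "Q" => FractionRing ℤ_[p]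

lemma baseChange_surjective (hc : IsPadicTorsion p (W ⧸ LinearMap.range μ)) :
    Function.Surjective (LinearMap.baseChange Q μ) := by
  intro z
  induction z using TensorProduct.induction_on with
  | zero => exact ⟨0, map_zero _⟩
  | tmul q w =>
    obtain ⟨lam, h0, h⟩ := hc (Submodule.Quotient.mk w)
    rw [← Submodule.Quotient.mk_smul, Submodule.Quotient.mk_eq_zero] at h
    obtain ⟨v, hv⟩ := h
    have hu : IsUnit (algebraMap R Q lam) :=
      IsLocalization.map_units Q ⟨lam, mem_nonZeroDivisors_of_ne_zero h0⟩
    refine ⟨(((hu.unit⁻¹ : Qˣ) : Q) * q) ⊗ₜ v, ?_⟩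
    rw [LinearMap.baseChange_tmul, hv, ← smul_tmul, Algebra.smul_def, ← mul_assoc,
      hu.mul_val_inv, one_mul]
  | add x y hx hy =>
    obtain ⟨a, ha⟩ := hx
    obtain ⟨b, hb⟩ := hy
    exact ⟨a + b, by rw [map_add, ha, hb]⟩

lemma baseChange_injective (hk : IsPadicTorsion p (LinearMap.ker μ)) :
    Function.Injective (LinearMap.baseChange Q μ) := by
  rw [injective_iff_map_eq_zero]
  intro x hx
  have hsub : ∀ z : Q ⊗[ℤ_[p]] (LinearMap.ker μ), z = 0 := by
    intro z
    induction z using TensorProduct.induction_on with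
    | zero => rfl
    | tmul q k =>
      obtain ⟨lam, h0, h⟩ := hk k
      exact torsion_tmul_zero p q k h0 h
    | add x y hx hy => rw [hx, hy, add_zero]
  have hex := Module.Flat.lTensor_exact Q (LinearMap.exact_subtype_ker_map μ)
  have hx' : LinearMap.lTensor Q μ x = 0 := by
    rw [← LinearMap.baseChange_eq_ltensor]; exact hx
  obtain ⟨y, hy⟩ := (hex x).mp hx'
  rw [← hy, hsub y, map_zero]

lemma baseChange_bijective (h : IsTMap p μ) :
    Function.Bijective (LinearMap.baseChange Q μ) :=
  ⟨baseChange_injective p μ h.1, baseChange_surjective p μ h.2⟩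

end Bij

section Main

variable (p : ℕ) [Fact p.Prime]
variable {V₁ W₁ V₂ W₂ : Type}
    [AddCommGroup V₁] [Module ℤ_[p] V₁] [AddCommGroup W₁] [Module ℤ_[p] W₁]
    [AddCommGroup V₂] [Module ℤ_[p] V₂] [AddCommGroup W₂] [Module ℤ_[p] W₂]
variable (μ₁ : V₁ →ₗ[ℤ_[p]] W₁) (μ₂ : V₂ →ₗ[ℤ_[p]] W₂)

local notation "R" => ℤ_[p]
local notation "Q" => FractionRing ℤ_[p]

lemma distrib_natural (x : Q ⊗[ℤ_[p]] (V₁ ⊗[ℤ_[p]] V₂)) :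
    TensorProduct.AlgebraTensorModule.distribBaseChange R Q W₁ W₂
        (LinearMap.baseChange Q (TensorProduct.map μ₁ μ₂) x) =
      TensorProduct.map (LinearMap.baseChange Q μ₁) (LinearMap.baseChange Q μ₂)
        (TensorProduct.AlgebraTensorModule.distribBaseChange R Q V₁ V₂ x) := by
  induction x using TensorProduct.induction_on with
  | zero => simp
  | tmul q y =>
    induction y using TensorProduct.induction_on with
    | zero => simp
    | tmul v₁ v₂ =>
      simp [TensorProduct.AlgebraTensorModule.distribBaseChange]
    | add a b ha hb =>
      rw [TensorProduct.tmul_add, map_add, map_add, ha, hb, map_add, map_add]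
  | add a b ha hb =>
    rw [map_add, map_add, ha, hb, map_add, map_add]

theorem stmt3' (h₁ : IsTMap p μ₁) (h₂ : IsTMap p μ₂) :
    IsTMap p (TensorProduct.map μ₁ μ₂) := by
  constructor
  · -- kernel is torsion
    have hmapbij : Function.Bijective
        (TensorProduct.map (LinearMap.baseChange Q μ₁) (LinearMap.baseChange Q μ₂)) := by
      let e₁ := LinearEquiv.ofBijective _ (baseChange_bijective p μ₁ h₁)
      let e₂ := LinearEquiv.ofBijective _ (baseChange_bijective p μ₂ h₂)
      have : TensorProduct.map (LinearMap.baseChange Q μ₁) (LinearMap.baseChange Q μ₂)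
          = (TensorProduct.congr e₁ e₂ : _ ≃ₗ[Q] _).toLinearMap := rfl
      rw [this]
      exact (TensorProduct.congr e₁ e₂).bijective
    have hinj : Function.Injective
        (LinearMap.baseChange Q (TensorProduct.map μ₁ μ₂)) := by
      rw [injective_iff_map_eq_zero]
      intro x hx
      have h0 := distrib_natural p μ₁ μ₂ x
      rw [hx, map_zero] at h0
      have h1 : TensorProduct.AlgebraTensorModule.distribBaseChange R Q V₁ V₂ x = 0 := by
        apply hmapbij.1
        rw [← h0, map_zero]
      simpa using
        congrArg (TensorProduct.AlgebraTensorModule.distribBaseChange R Q V₁ V₂).symm h1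
    intro u
    have hu : LinearMap.baseChange Q (TensorProduct.map μ₁ μ₂)
        ((1 : Q) ⊗ₜ[ℤ_[p]] (u : V₁ ⊗[ℤ_[p]] V₂)) = 0 := by
      rw [LinearMap.baseChange_tmul]
      have : TensorProduct.map μ₁ μ₂ (u : V₁ ⊗[ℤ_[p]] V₂) = 0 := u.2
      rw [this, TensorProduct.tmul_zero]
    have := hinj (by rw [hu, map_zero] : LinearMap.baseChange Q (TensorProduct.map μ₁ μ₂)
        ((1 : Q) ⊗ₜ[ℤ_[p]] (u : V₁ ⊗[ℤ_[p]] V₂)) = LinearMap.baseChange Q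
        (TensorProduct.map μ₁ μ₂) 0)
    obtain ⟨lam, hl0, hl⟩ := (one_tmul_eq_zero_iff p _).mp this
    exact ⟨lam, hl0, Subtype.ext (by simpa using hl)⟩
  · -- cokernel is torsion
    have key : ∀ w : W₁ ⊗[ℤ_[p]] W₂, ∃ lam : ℤ_[p], lam ≠ 0 ∧
        lam • w ∈ LinearMap.range (TensorProduct.map μ₁ μ₂) := by
      intro w
      induction w using TensorProduct.induction_on with
      | zero => exact ⟨1, one_ne_zero, by simp⟩
      | tmul w₁ w₂ =>
        obtain ⟨lam₁, h10, h1⟩ := h₁.2 (Submodule.Quotient.mk w₁)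
        obtain ⟨lam₂, h20, h2⟩ := h₂.2 (Submodule.Quotient.mk w₂)
        rw [← Submodule.Quotient.mk_smul, Submodule.Quotient.mk_eq_zero] at h1 h2
        obtain ⟨v₁, hv₁⟩ := h1
        obtain ⟨v₂, hv₂⟩ := h2
        refine ⟨lam₁ * lam₂, mul_ne_zero h10 h20, ⟨v₁ ⊗ₜ v₂, ?_⟩⟩
        rw [TensorProduct.map_tmul, hv₁, hv₂, ← TensorProduct.smul_tmul',
          TensorProduct.tmul_smul, ← mul_smul]
      | add a b ha hb =>
        obtain ⟨la, la0, ⟨xa, hxa⟩⟩ := ha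
        obtain ⟨lb, lb0, ⟨xb, hxb⟩⟩ := hb
        refine ⟨la * lb, mul_ne_zero la0 lb0, ⟨lb • xa + la • xb, ?_⟩⟩
        rw [map_add, map_smul, map_smul, hxa, hxb, smul_add, ← mul_smul, ← mul_smul,
          mul_comm lb la]
    intro y
    obtain ⟨w, rfl⟩ := Submodule.Quotient.mk_surjective _ y
    obtain ⟨lam, h0, hmem⟩ := key w
    exact ⟨lam, h0, by rwa [← Submodule.Quotient.mk_smul, Submodule.Quotient.mk_eq_zero]⟩

end Main

/-- If `μ₁ : V₁ → W₁` and `μ₂ : V₂ → W₂` are T-maps of `ℤ_[p]`-modules then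
`μ₁ ⊗ μ₂ : V₁ ⊗[ℤ_[p]] V₂ → W₁ ⊗[ℤ_[p]] W₂` is a T-map. -/
theorem stmt3 (p : ℕ) [Fact p.Prime] (V₁ W₁ V₂ W₂ : Type)
    [AddCommGroup V₁] [Module ℤ_[p] V₁] [AddCommGroup W₁] [Module ℤ_[p] W₁]
    [AddCommGroup V₂] [Module ℤ_[p] V₂] [AddCommGroup W₂] [Module ℤ_[p] W₂]
    (μ₁ : V₁ →ₗ[ℤ_[p]] W₁) (μ₂ : V₂ →ₗ[ℤ_[p]] W₂) (h₁ : IsTMap p μ₁) (h₂ : IsTMap p μ₂) :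
    IsTMap p (TensorProduct.map μ₁ μ₂) := by
  exact stmt3' p μ₁ μ₂ h₁ h₂
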